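/- If a PEPA component P satisfies PSNI, then for every action type α ∈ ℒ∪{τ} and every rate r, the prefixed component (α,r).P satisfies PSNI. -/

import Mathlib

open scoped ENNReal Classical

/-- Action types: a countable set with a distinguished silent type `tau`. -/
inductive Act : Type where
  | tau : Act
  | vis : ℕ → Act
deriving DecidableEq

/-- PEPA components: prefix `(α,r).P`, choice `P+Q`, cooperation `P ⊲⊳_L Q`,
hiding `P/L`, and constants `A` (given by an environment of defining equations).
Rates live in `ℝ≥0∞` (positive reals together with the unspecified symbol `⊤`). -/
inductive Proc : Type where
  | pre : Act → ℝ≥0∞ → Proc → Proc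
  | choice : Proc → Proc → Proc
  | coop : Proc → Set Act → Proc → Proc
  | hide : Proc → Set Act → Proc
  | const : ℕ → Proc

namespace PEPA

/-- Fuelled conditional transition rate `qF E n P α P'`: the total rate
(with multiplicities) of the `α`-transitions from `P` to `P'` in the
multi-transition system given by the operational semantics of Table 1,
computed with `n` units of fuel for unfolding constants.
The shared-activity (cooperation) rule uses the apparent rates
`r_α(P) = ∑' X, qF E n P α X` as in
`R = (r₁/r_α(P)) · (r₂/r_α(Q)) · min(r_α(P), r_α(Q))`. -/
noncomputable def qF (E : ℕ → Proc) : ℕ → Proc → Act → Proc → ℝ≥0∞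
  | 0, _, _, _ => 0
  | n+1, .pre β r P, α, X => if β = α ∧ X = P then r else 0
  | n+1, .choice P Q, α, X => qF E n P α X + qF E n Q α X
  | n+1, .hide P L, α, X =>
      match X with
      | .hide P' L' =>
          if L' = L then
            if α = .tau then qF E n P .tau P' + ∑' β : L, qF E n P β P'
            else if α ∈ L then 0 else qF E n P α P'
          else 0
      | _ => 0
  | n+1, .coop P L Q, α, X =>
      match X with
      | .coop P' L' Q' =>
          if L' = L then
            if α ∈ L then
              (qF E n P α P' / ∑' Y, qF E n P α Y) * (qF E n Q α Q' / ∑' Y, qF E n Q α Y)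
                * min (∑' Y, qF E n P α Y) (∑' Y, qF E n Q α Y)
            else
              (if Q' = Q then qF E n P α P' else 0) + (if P' = P then qF E n Q α Q' else 0)
          else 0
      | _ => 0
  | n+1, .const c, α, X => qF E n (E c) α X

/-- `q E P α P'` : the (total) conditional transition rate from `P` to `P'`
via action type `α`, i.e. the sum of the rates over all transitions
`P --(α,r)--> P'` of the multi-transition system. -/
noncomputable def q (E : ℕ → Proc) (P : Proc) (α : Act) (P' : Proc) : ℝ≥0∞ :=
  ⨆ n, qF E n P α P'

/-- Total conditional transition rate `q[P,S,α] = Σ_{P'∈S} q(P,P',α)`. -/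
noncomputable def qTo (E : ℕ → Proc) (P : Proc) (S : Set Proc) (α : Act) : ℝ≥0∞ :=
  ∑' P' : S, q E P α P'

/-- One step of the derivation graph: `P` has some transition to `P'`. -/
def Step (E : ℕ → Proc) (P P' : Proc) : Prop := ∃ α, q E P α P' ≠ 0

/-- The derivative set `ds(P)`: the set of states reachable from `P`. -/
def ds (E : ℕ → Proc) (P : Proc) : Set Proc :=
  {P' | Relation.ReflTransGen (Step E) P P'}

/-- `𝒜(P)`: the set of current action types of `P`. -/
def curTypes (E : ℕ → Proc) (P : Proc) : Set Act :=
  {α | ∃ P', q E P α P' ≠ 0}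

/-- The set of equivalence classes `𝒞/ℛ` of a relation `ℛ`. -/
def eqCls (R : Proc → Proc → Prop) : Set (Set Proc) :=
  {S | ∃ P, S = {Q | R P Q}}

/-- A lumpable bisimulation: an equivalence relation `R` such that whenever
`R P Q`, then for all `α` and all classes `S` of `R` with either `α ≠ τ`, or
`α = τ` and `P,Q ∉ S`, it holds that `q[P,S,α] = q[Q,S,α]`. -/
def IsLumpBisim (E : ℕ → Proc) (R : Proc → Proc → Prop) : Prop :=
  Equivalence R ∧
    ∀ P Q, R P Q → ∀ α, ∀ S ∈ eqCls R,
      (α ≠ Act.tau ∨ (P ∉ S ∧ Q ∉ S)) → qTo E P S α = qTo E Q S α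

/-- Lumpable bisimilarity `≈_l`: the union of all lumpable bisimulations. -/
def lb (E : ℕ → Proc) (P Q : Proc) : Prop :=
  ∃ R, IsLumpBisim E R ∧ R P Q

section High

-- `Hs` is the set `ℋ` of high action types (the remaining visible types are low).
variable (E : ℕ → Proc) (Hs : Set Act)

/-- A high level component: every derivative may next engage in high types only. -/
def IsHighComp (Hc : Proc) : Prop := ∀ H' ∈ ds E Hc, curTypes E H' ⊆ Hs

/-- The set `ℒ` of low action types. -/
def Low : Set Act := {α | α ∉ Hs ∧ α ≠ Act.tau}

/-- An inert component: a high level component performing no activity at all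
(hence sharing no action type with any component). -/
def inert : Proc := .pre .tau 0 (.const 0)

/-- `P \ ℋ` : `P ⊲⊳_ℋ H̄` where `H̄` is a high level component that does not
cooperate with `P` (it shares no action types with the derivatives of `P`). -/
def restr (P : Proc) : Proc := .coop P Hs inert

/-- The high context `C[_] = (_ ⊲⊳_ℋ Hc)/ℋ` applied to `P`. -/
def hctx (Hc P : Proc) : Proc := .hide (.coop P Hs Hc) Hs

/-- Stochastic Non-Interference: `P\ℋ ≈_l (P ⊲⊳_ℋ H)/ℋ` for every high `H`. -/
def SNI (P : Proc) : Prop :=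
  ∀ Hc, IsHighComp E Hs Hc → lb E (restr Hs P) (hctx Hs Hc P)

/-- Persistent Stochastic Non-Interference: every derivative of `P` satisfies SNI. -/
def PSNI (P : Proc) : Prop := ∀ P' ∈ ds E P, SNI E Hs P'

/-- `q_C(P,P',α)`: the sum of the rates over all transitions
`C[P] --(α,r)--> C'[P']` (with `C'[_]` ranging over high contexts). -/
noncomputable def qC (Hc P : Proc) (α : Act) (P' : Proc) : ℝ≥0∞ :=
  ∑' Hc' : Proc, q E (hctx Hs Hc P) α (hctx Hs Hc' P')

/-- `q_C[P,S,α] = Σ_{P'∈S} q_C(P,P',α)`. -/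
noncomputable def qCTo (Hc P : Proc) (S : Set Proc) (α : Act) : ℝ≥0∞ :=
  ∑' P' : S, qC E Hs Hc P α P'

/-- A lumpable bisimulation on high contexts. -/
def IsLumpBisimHC (R : Proc → Proc → Prop) : Prop :=
  Equivalence R ∧
    ∀ P Q, R P Q → ∀ Hc, IsHighComp E Hs Hc → ∀ α, ∀ S ∈ eqCls R,
      (α ≠ Act.tau ∨ (P ∉ S ∧ Q ∉ S)) →
        qCTo E Hs Hc P S α = qCTo E Hs Hc Q S α

/-- Lumpable bisimilarity on high contexts `≈_l^hc`. -/
def lbhc (P Q : Proc) : Prop := ∃ R, IsLumpBisimHC E Hs R ∧ R P Q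

/-- A lumpable bisimulation up to `ℋ`. -/
def IsLumpBisimUpto (R : Proc → Proc → Prop) : Prop :=
  Equivalence R ∧
    ∀ P Q, R P Q → ∀ α, ∀ S ∈ eqCls R,
      ((α ∉ Hs ∧ α ≠ Act.tau) → qTo E P S α = qTo E Q S α) ∧
      ((α ∈ Hs ∨ α = Act.tau) → P ∉ S → Q ∉ S → qTo E P S α = qTo E Q S α)

/-- Lumpable bisimilarity up to `ℋ`, written `≈_l^ℋ`. -/
def lbUpto (P Q : Proc) : Prop := ∃ R, IsLumpBisimUpto E Hs R ∧ R P Q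

end High

end PEPA

open PEPA

namespace PEPA
variable {E : ℕ → Proc} {Hs : Set Act}

lemma qF_pre (E : ℕ → Proc) (β : Act) (r : ℝ≥0∞) (P : Proc) (n : ℕ) (γ : Act) (X : Proc) :
    qF E n (.pre β r P) γ X = if 1 ≤ n ∧ β = γ ∧ X = P then r else 0 := by
  cases n with
  | zero => simp [qF]
  | succ n => simp [qF]

lemma qF_le_q (E : ℕ → Proc) (n : ℕ) (P : Proc) (γ : Act) (X : Proc) :
    qF E n P γ X ≤ q E P γ X := le_iSup (fun n => qF E n P γ X) n

lemma q_high_eq_zero {Hc : Proc} (hHc : IsHighComp E Hs Hc)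
    {γ : Act} (hγ : γ ∉ Hs) (X : Proc) : q E Hc γ X = 0 := by
  by_contra h
  exact hγ (hHc Hc Relation.ReflTransGen.refl ⟨X, h⟩)

lemma qF_high_eq_zero {Hc : Proc} (hHc : IsHighComp E Hs Hc)
    {γ : Act} (hγ : γ ∉ Hs) (n : ℕ) (X : Proc) : qF E n Hc γ X = 0 :=
  le_antisymm (le_trans (qF_le_q E n Hc γ X) (q_high_eq_zero hHc hγ X).le) (zero_le)

lemma qF_inert (E : ℕ → Proc) (n : ℕ) (γ : Act) (X : Proc) :
    qF E n inert γ X = 0 := by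
  cases n with
  | zero => simp [qF]
  | succ m => simp [qF, inert]

-- coop with a "quiet on non-Hs" partner Q₀
lemma qF_coop_pre_high {α : Act} (hα : α ∉ Hs) {Q₀ : Proc}
    (hQ : ∀ n γ X, γ ∉ Hs → qF E n Q₀ γ X = 0)
    (r : ℝ≥0∞) (P : Proc) (n : ℕ) (γ : Act) (X : Proc) :
    qF E n (.coop (.pre α r P) Hs Q₀) γ X =
      if 2 ≤ n ∧ γ ∉ Hs ∧ α = γ ∧ X = .coop P Hs Q₀ then r else 0 := by
  cases n with
  | zero => simp [qF]
  | succ n =>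
    cases X with
    | coop P' L' Q' =>
      simp only [qF]
      by_cases hL : L' = Hs
      · rw [if_pos hL]
        by_cases hmem : γ ∈ Hs
        · have hne : ¬ (α = γ) := fun h => hα (h ▸ hmem)
          have hnum : qF E n (Proc.pre α r P) γ P' = 0 := by
            rw [qF_pre]; simp [hne]
          rw [if_pos hmem, hnum, ENNReal.zero_div, zero_mul, zero_mul]
          simp [hmem]
        · have h2 : qF E n Q₀ γ Q' = 0 := hQ n γ Q' hmem
          rw [if_neg hmem, h2, qF_pre]
          by_cases hq : Q' = Q₀ <;> by_cases hn : 1 ≤ n <;>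
            by_cases hg : α = γ <;> by_cases hp : P' = P <;>
            simp_all [Nat.succ_le_succ_iff] <;> omega
      · simp [hL]
    | pre a b c => simp [qF]
    | choice a b => simp [qF]
    | hide a b => simp [qF]
    | const a => simp [qF]

end PEPA
namespace PEPA
variable {E : ℕ → Proc} {Hs : Set Act}

lemma iSup_threshold (f : ℕ → ℝ≥0∞) (N : ℕ) (c : Prop) [Decidable c] (v : ℝ≥0∞)
    (h : ∀ n, f n = if N ≤ n ∧ c then v else 0) :
    (⨆ n, f n) = if c then v else 0 := by
  apply le_antisymm
  · refine iSup_le fun n => ?_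
    rw [h n]
    split_ifs with h1 h2 h3 <;> simp_all
  · refine le_iSup_of_le N ?_
    rw [h N]
    split_ifs with h1 h2 h3 <;> simp_all

lemma q_restr_pre {α : Act} (hα : α ∉ Hs) (r : ℝ≥0∞) (P : Proc) (β : Act) (X : Proc) :
    q E (restr Hs (.pre α r P)) β X =
      if α = β ∧ X = restr Hs P then r else 0 := by
  rw [q]
  have : ∀ n, qF E n (restr Hs (.pre α r P)) β X =
      if 2 ≤ n ∧ (α = β ∧ X = restr Hs P) then r else 0 := by
    intro n
    rw [restr, qF_coop_pre_high hα (fun n γ X _ => qF_inert E n γ X)]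
    by_cases hβ : β ∈ Hs
    · have : ¬ (α = β) := fun h => hα (h ▸ hβ)
      simp [hβ, this]
    · simp [hβ, restr, and_comm, and_assoc]; congr 1
  exact iSup_threshold _ 2 _ _ this

lemma q_hctx_pre {α : Act} (hα : α ∉ Hs) (hτ : Act.tau ∉ Hs) {Hc : Proc}
    (hHc : IsHighComp E Hs Hc) (r : ℝ≥0∞) (P : Proc) (β : Act) (X : Proc) :
    q E (hctx Hs Hc (.pre α r P)) β X =
      if α = β ∧ X = hctx Hs Hc P then r else 0 := by
  rw [q]
  refine iSup_threshold _ 3 _ _ fun n => ?_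
  have hcoop := qF_coop_pre_high (E := E) hα (fun n γ X hγ => qF_high_eq_zero hHc hγ n X) r P
  cases n with
  | zero => simp [qF]
  | succ n =>
    cases X with
    | hide P₂ L' =>
      simp only [qF, hctx]
      by_cases hL : L' = Hs
      · rw [if_pos hL]
        by_cases hβτ : β = Act.tau
        · subst hβτ
          rw [if_pos rfl]
          have hsum : (∑' γ : Hs, qF E n (.coop (.pre α r P) Hs Hc) γ P₂) = 0 := by
            refine ENNReal.tsum_eq_zero.mpr fun γ => ?_
            rw [hcoop]
            simp [γ.2]
          rw [hsum, add_zero, hcoop]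
          by_cases hn : 2 ≤ n <;> by_cases hg : α = Act.tau <;>
            by_cases hp : P₂ = Proc.coop P Hs Hc <;>
            simp_all [hτ, Nat.succ_le_succ_iff, hL] <;> omega
        · rw [if_neg hβτ]
          by_cases hβ : β ∈ Hs
          · have : ¬ (α = β) := fun h => hα (h ▸ hβ)
            simp [hβ, this]
          · rw [if_neg hβ, hcoop]
            by_cases hn : 2 ≤ n <;> by_cases hg : α = β <;>
              by_cases hp : P₂ = Proc.coop P Hs Hc <;>
              simp_all [Nat.succ_le_succ_iff, hL] <;> omega
      · simp [hL, hctx]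
    | pre a b c => simp [qF, hctx]
    | choice a b => simp [qF, hctx]
    | coop a b c => simp [qF, hctx]
    | const a => simp [qF, hctx]

end PEPA
namespace PEPA
variable {E : ℕ → Proc} {Hs : Set Act}

lemma qTo_of_single {X t : Proc} {β : Act} {c : Prop} [Decidable c] {v : ℝ≥0∞}
    (h : ∀ Y, q E X β Y = if c ∧ Y = t then v else 0) (S : Set Proc) :
    qTo E X S β = if c ∧ t ∈ S then v else 0 := by
  rw [qTo]
  by_cases hc : c
  · by_cases ht : t ∈ S
    · rw [if_pos ⟨hc, ht⟩]
      have := tsum_eq_single (L := SummationFilter.unconditional _) (f := fun Y : S => q E X β ↑Y) ⟨t, ht⟩ ?_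
      · rw [this, h]
        simp [hc]
      · intro Y hY
        show q E X β ↑Y = 0
        rw [h]
        exact if_neg (fun hcon : c ∧ (Y : Proc) = t => hY (Subtype.ext hcon.2))
    · rw [if_neg (fun hcon : c ∧ t ∈ S => ht hcon.2)]
      refine ENNReal.tsum_eq_zero.mpr fun Y => ?_
      show q E X β ↑Y = 0
      rw [h]
      exact if_neg fun hcon : c ∧ (Y : Proc) = t => ht (hcon.2 ▸ Y.2)
  · rw [if_neg (fun hcon : c ∧ t ∈ S => hc hcon.1)]
    refine ENNReal.tsum_eq_zero.mpr fun Y => ?_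
    show q E X β ↑Y = 0
    rw [h]
    exact if_neg fun hcon : c ∧ (Y : Proc) = t => hc hcon.1

lemma q_pre' (E : ℕ → Proc) (β : Act) (r : ℝ≥0∞) (P : Proc) (γ : Act) (X : Proc) :
    q E (.pre β r P) γ X = if β = γ ∧ X = P then r else 0 :=
  iSup_threshold _ 1 _ _ (fun n => qF_pre E β r P n γ X)

end PEPA

open PEPA

theorem psni_pre' (E : ℕ → Proc) (Hs : Set Act) (hτ : Act.tau ∉ Hs) (P : Proc)
    (hP : PSNI E Hs P) :
    ∀ α ∈ Low Hs ∪ {Act.tau}, ∀ r : ℝ≥0∞, PSNI E Hs (.pre α r P) := by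
  intro α hαmem r
  have hα : α ∉ Hs := by
    rcases hαmem with h | h
    · exact h.1
    · simp only [Set.mem_singleton_iff] at h
      exact h ▸ hτ
  have hSNIpre : SNI E Hs (.pre α r P) := by
    intro Hc hHc
    obtain ⟨R0, ⟨he, hbis⟩, hab⟩ := hP P Relation.ReflTransGen.refl Hc hHc
    set a := restr Hs (Proc.pre α r P) with ha_def
    set b := hctx Hs Hc (Proc.pre α r P) with hb_def
    set a' := restr Hs P with ha'_def
    set b' := hctx Hs Hc P with hb'_def
    -- the quotient with classes of a and b merged
    set R : Proc → Proc → Prop :=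
      fun Z W => R0 Z W ∨ (R0 a Z ∧ R0 b W) ∨ (R0 b Z ∧ R0 a W) with hR_def
    have heq : Equivalence R := by
      constructor
      · exact fun Z => Or.inl (he.refl Z)
      · rintro Z W (h | ⟨h1, h2⟩ | ⟨h1, h2⟩)
        · exact Or.inl (he.symm h)
        · exact Or.inr (Or.inr ⟨h2, h1⟩)
        · exact Or.inr (Or.inl ⟨h2, h1⟩)
      · rintro X Y Z (h | ⟨h1, h2⟩ | ⟨h1, h2⟩) (h' | ⟨h1', h2'⟩ | ⟨h1', h2'⟩)
        · exact Or.inl (he.trans h h')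
        · exact Or.inr (Or.inl ⟨he.trans h1' (he.symm h), h2'⟩)
        · exact Or.inr (Or.inr ⟨he.trans h1' (he.symm h), h2'⟩)
        · exact Or.inr (Or.inl ⟨h1, he.trans h2 h'⟩)
        · exact Or.inr (Or.inl ⟨h1, h2'⟩)
        · exact Or.inl (he.trans (he.symm h1) h2')
        · exact Or.inr (Or.inr ⟨h1, he.trans h2 h'⟩)
        · exact Or.inl (he.trans (he.symm h1) h2')
        · exact Or.inr (Or.inr ⟨h1, h2'⟩)
    -- the merged class
    set C : Set Proc := {Z | R0 a Z ∨ R0 b Z} with hC_def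
    -- transition structure of a and b
    have qa : ∀ S β, qTo E a S β = if (α = β) ∧ a' ∈ S then r else 0 :=
      fun S β => qTo_of_single (fun Y => q_restr_pre hα r P β Y) S
    have qb : ∀ S β, qTo E b S β = if (α = β) ∧ b' ∈ S then r else 0 :=
      fun S β => qTo_of_single (fun Y => q_hctx_pre hα hτ hHc r P β Y) S
    -- membership of a' and b' agrees on R-classes and on C
    have haC : a' ∈ C ↔ b' ∈ C := by
      constructor
      · rintro (h | h)
        · exact Or.inl (he.trans h hab)
        · exact Or.inr (he.trans h hab)
      · rintro (h | h)
        · exact Or.inl (he.trans h (he.symm hab))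
        · exact Or.inr (he.trans h (he.symm hab))
    have haW : ∀ W, (a' ∈ {Z | R0 W Z}) ↔ (b' ∈ {Z | R0 W Z}) :=
      fun W => ⟨fun h => he.trans h hab, fun h => he.trans h (he.symm hab)⟩
    have qaqb : ∀ β, qTo E a C β = qTo E b C β := by
      intro β
      rw [qa, qb]
      by_cases h : a' ∈ C
      · simp [h, haC.mp h]
      · have h2 : b' ∉ C := fun hc => h (haC.mpr hc)
        simp [h, h2]
    have qaqbW : ∀ W β, qTo E a {Z | R0 W Z} β = qTo E b {Z | R0 W Z} β := by
      intro W β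
      rw [qa, qb]
      by_cases h : a' ∈ {Z | R0 W Z}
      · simp [h, (haW W).mp h]
      · have h2 : b' ∉ {Z | R0 W Z} := fun hc => h ((haW W).mpr hc)
        simp [h, h2]
    -- qTo into C for R0-related pairs
    have qTo_C : ∀ X Y β, R0 X Y → (β ≠ Act.tau ∨ (X ∉ C ∧ Y ∉ C)) →
        qTo E X C β = qTo E Y C β := by
      intro X Y β hXY hside
      by_cases hab' : R0 a b
      · have hCeq : C = {Z | R0 a Z} := by
          ext Z
          constructor
          · rintro (h | h)
            · exact h
            · exact he.trans hab' h
          · exact fun h => Or.inl h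
        rw [hCeq] at hside ⊢
        exact hbis X Y hXY β _ ⟨a, rfl⟩ hside
      · have hd : Disjoint {Z | R0 a Z} {Z | R0 b Z} :=
          Set.disjoint_left.mpr fun Z hz1 hz2 => hab' (he.trans hz1 (he.symm hz2))
        have hCeq : C = {Z | R0 a Z} ∪ {Z | R0 b Z} := rfl
        have hsplit : ∀ W, qTo E W C β =
            qTo E W {Z | R0 a Z} β + qTo E W {Z | R0 b Z} β := by
          intro W
          rw [hCeq, qTo, qTo, qTo]
          exact Summable.tsum_union_disjoint (f := fun Z => q E W β Z) hd
            ENNReal.summable ENNReal.summable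
        rw [hsplit X, hsplit Y]
        have hsidea : β ≠ Act.tau ∨ (X ∉ {Z | R0 a Z} ∧ Y ∉ {Z | R0 a Z}) := by
          rcases hside with h | ⟨h1, h2⟩
          · exact Or.inl h
          · exact Or.inr ⟨fun hc => h1 (Or.inl hc), fun hc => h2 (Or.inl hc)⟩
        have hsideb : β ≠ Act.tau ∨ (X ∉ {Z | R0 b Z} ∧ Y ∉ {Z | R0 b Z}) := by
          rcases hside with h | ⟨h1, h2⟩
          · exact Or.inl h
          · exact Or.inr ⟨fun hc => h1 (Or.inr hc), fun hc => h2 (Or.inr hc)⟩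
        rw [hbis X Y hXY β _ ⟨a, rfl⟩ hsidea, hbis X Y hXY β _ ⟨b, rfl⟩ hsideb]
    refine ⟨R, ⟨heq, ?_⟩, Or.inr (Or.inl ⟨he.refl a, he.refl b⟩)⟩
    intro X Y hXY β S hS hside
    obtain ⟨W, rfl⟩ := hS
    by_cases hW : R0 W a ∨ R0 W b
    · -- the class of W is C
      have hcls : {Z | R W Z} = C := by
        ext Z
        simp only [hR_def, hC_def, Set.mem_setOf_eq]
        constructor
        · rintro (h | ⟨h1, h2⟩ | ⟨h1, h2⟩)
          · rcases hW with hw | hw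
            · exact Or.inl (he.trans (he.symm hw) h)
            · exact Or.inr (he.trans (he.symm hw) h)
          · exact Or.inr h2
          · exact Or.inl h2
        · rintro (h | h)
          · rcases hW with hw | hw
            · exact Or.inl (he.trans hw h)
            · exact Or.inr (Or.inr ⟨he.symm hw, h⟩)
          · rcases hW with hw | hw
            · exact Or.inr (Or.inl ⟨he.symm hw, h⟩)
            · exact Or.inl (he.trans hw h)
      rw [hcls] at hside ⊢
      rcases hXY with h | ⟨h1, h2⟩ | ⟨h1, h2⟩
      · exact qTo_C X Y β h hside
      · -- X ∈ C, so β ≠ τ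
        have hXC : X ∈ C := Or.inl h1
        have hβτ : β ≠ Act.tau := by
          rcases hside with h | ⟨hx, _⟩
          · exact h
          · exact absurd hXC hx
        calc qTo E X C β = qTo E a C β := qTo_C X a β (he.symm h1) (Or.inl hβτ)
          _ = qTo E b C β := qaqb β
          _ = qTo E Y C β := qTo_C b Y β h2 (Or.inl hβτ)
      · have hXC : X ∈ C := Or.inr h1
        have hβτ : β ≠ Act.tau := by
          rcases hside with h | ⟨hx, _⟩
          · exact h
          · exact absurd hXC hx
        calc qTo E X C β = qTo E b C β := qTo_C X b β (he.symm h1) (Or.inl hβτ)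
          _ = qTo E a C β := (qaqb β).symm
          _ = qTo E Y C β := qTo_C a Y β h2 (Or.inl hβτ)
    · push_neg at hW
      obtain ⟨hWa, hWb⟩ := hW
      have hcls : {Z | R W Z} = {Z | R0 W Z} := by
        ext Z
        simp only [hR_def, Set.mem_setOf_eq]
        constructor
        · rintro (h | ⟨h1, h2⟩ | ⟨h1, h2⟩)
          · exact h
          · exact absurd (he.symm h1) hWa
          · exact absurd (he.symm h1) hWb
        · exact fun h => Or.inl h
      rw [hcls] at hside ⊢
      rcases hXY with h | ⟨h1, h2⟩ | ⟨h1, h2⟩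
      · exact hbis X Y h β _ ⟨W, rfl⟩ hside
      · -- X in class of a, Y in class of b; all of X, Y, a, b avoid this class
        have hXn : X ∉ {Z | R0 W Z} := fun hc => hWa (he.trans hc (he.symm h1))
        have hYn : Y ∉ {Z | R0 W Z} := fun hc => hWb (he.trans hc (he.symm h2))
        have han : a ∉ {Z | R0 W Z} := hWa
        have hbn : b ∉ {Z | R0 W Z} := hWb
        calc qTo E X {Z | R0 W Z} β = qTo E a {Z | R0 W Z} β :=
              hbis X a (he.symm h1) β _ ⟨W, rfl⟩ (Or.inr ⟨hXn, han⟩)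
          _ = qTo E b {Z | R0 W Z} β := qaqbW W β
          _ = qTo E Y {Z | R0 W Z} β :=
              hbis b Y h2 β _ ⟨W, rfl⟩ (Or.inr ⟨hbn, hYn⟩)
      · have hXn : X ∉ {Z | R0 W Z} := fun hc => hWb (he.trans hc (he.symm h1))
        have hYn : Y ∉ {Z | R0 W Z} := fun hc => hWa (he.trans hc (he.symm h2))
        calc qTo E X {Z | R0 W Z} β = qTo E b {Z | R0 W Z} β :=
              hbis X b (he.symm h1) β _ ⟨W, rfl⟩ (Or.inr ⟨hXn, hWb⟩)
          _ = qTo E a {Z | R0 W Z} β := (qaqbW W β).symm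
          _ = qTo E Y {Z | R0 W Z} β :=
              hbis a Y h2 β _ ⟨W, rfl⟩ (Or.inr ⟨hWa, hYn⟩)
  -- now PSNI
  intro P' hP'
  rcases Relation.ReflTransGen.cases_head hP' with rfl | ⟨Q, hstep, htail⟩
  · exact hSNIpre
  · obtain ⟨β, hq⟩ := hstep
    rw [q_pre'] at hq
    have hQP : Q = P := by
      by_contra hne
      exact hq (if_neg fun hc => hne hc.2)
    subst hQP
    exact hP P' htail
/-- PSNI is compositional w.r.t. low (or silent) prefixes:
if `P ∈ PSNI` then `(α,r).P ∈ PSNI` for all `α ∈ ℒ ∪ {τ}` and every rate `r`. -/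
theorem psni_pre (E : ℕ → Proc) (Hs : Set Act) (hτ : Act.tau ∉ Hs) (P : Proc)
    (hP : PSNI E Hs P) :
    ∀ α ∈ Low Hs ∪ {Act.tau}, ∀ r : ℝ≥0∞, PSNI E Hs (.pre α r P) := by
  exact psni_pre' E Hs hτ P hP
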